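/- Let A be an Artin algebra and let a dominant Auslander-Gorenstein algebra be an Iwanaga-Gorenstein algebra such that idim P ≤ domdim P for every indecomposable projective module P. If A is dominant Auslander-Gorenstein and P is an indecomposable projective non-injective A-module, then domdim P = idim P. -/

import Mathlib

open CategoryTheory CategoryTheory.Limits

namespace Paper

variable (R : Type) [Ring R]

/-! ## Basic notions -/

/-- A submodule is essential if it meets every nonzero submodule nontrivially. -/
def Essential {M : Type} [AddCommGroup M] [Module R M] (S : Submodule R M) : Prop :=
  ∀ N : Submodule R M, N ≠ ⊥ → N ⊓ S ≠ ⊥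

/-- An object of `ModuleCat R` is indecomposable. -/
def Indec (M : ModuleCat.{0} R) : Prop :=
  ¬ IsZero M ∧ ∀ e : M ⟶ M, e ≫ e = e → e = 0 ∨ e = 𝟙 M

/-- The radical of a module. -/
def radM (M : ModuleCat.{0} R) : Submodule R M :=
  (Ideal.jacobson (⊥ : Ideal R)) • (⊤ : Submodule R M)

/-! ## Resolutions and homological dimensions -/

/-- An injective coresolution `0 → M → I⁰ → I¹ → ⋯`. -/
structure InjCores (M : ModuleCat.{0} R) where
  I : ℕ → ModuleCat.{0} R
  ι : M ⟶ I 0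
  d : ∀ n : ℕ, I n ⟶ I (n + 1)
  inj : ∀ n, Injective (I n)
  mono : Function.Injective ι
  exact0 : LinearMap.range ι.hom = LinearMap.ker (d 0).hom
  exact : ∀ n, LinearMap.range (d n).hom = LinearMap.ker (d (n + 1)).hom

/-- Minimality of an injective coresolution: all kernels are essential submodules. -/
def InjCores.Minimal {M : ModuleCat.{0} R} (C : InjCores R M) : Prop :=
  Essential R (LinearMap.range C.ι.hom) ∧ ∀ n, Essential R (LinearMap.ker (C.d n).hom)

/-- A projective resolution `⋯ → P₁ → P₀ → M → 0`. -/
structure ProjRes (M : ModuleCat.{0} R) where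
  P : ℕ → ModuleCat.{0} R
  π : P 0 ⟶ M
  d : ∀ n : ℕ, P (n + 1) ⟶ P n
  proj : ∀ n, Projective (P n)
  epi : Function.Surjective π
  exact0 : LinearMap.range (d 0).hom = LinearMap.ker π.hom
  exact : ∀ n, LinearMap.range (d (n + 1)).hom = LinearMap.ker (d n).hom

/-- Minimality of a projective resolution: all kernels are superfluous. -/
def ProjRes.Minimal {M : ModuleCat.{0} R} (D : ProjRes R M) : Prop :=
  LinearMap.ker D.π.hom ≤ radM R (D.P 0) ∧ ∀ n, LinearMap.ker (D.d n).hom ≤ radM R (D.P (n + 1))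

/-- Injective dimension as an element of `ℕ∞`. -/
noncomputable def idim (M : ModuleCat.{0} R) : ℕ∞ :=
  sInf {n : ℕ∞ | ∃ C : InjCores R M, ∀ m : ℕ, n < (m : ℕ∞) → IsZero (C.I m)}

/-- Projective dimension as an element of `ℕ∞`. -/
noncomputable def pdim (M : ModuleCat.{0} R) : ℕ∞ :=
  sInf {n : ℕ∞ | ∃ D : ProjRes R M, ∀ m : ℕ, n < (m : ℕ∞) → IsZero (D.P m)}

/-- Dominant dimension: the supremum of all `n` such that there is an injective
coresolution whose first `n` terms are projective(-injective). -/
noncomputable def domdim (M : ModuleCat.{0} R) : ℕ∞ :=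
  sSup {n : ℕ∞ | ∃ k : ℕ, n = (k : ℕ∞) ∧
    ∃ C : InjCores R M, ∀ m : ℕ, m < k → Projective (C.I m)}

/-- The regular module. -/
noncomputable def reg : ModuleCat.{0} R := ModuleCat.of R R

noncomputable def domdimAlg : ℕ∞ := domdim R (reg R)

noncomputable def idimAlg : ℕ∞ := idim R (reg R)

noncomputable def gldim : ℕ∞ := ⨆ M : ModuleCat.{0} R, pdim R M

/-- Iwanaga-Gorenstein algebras. -/
def IwanagaGorenstein : Prop := idimAlg R ≠ ⊤ ∧ idimAlg Rᵐᵒᵖ ≠ ⊤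

/-- Dominant Auslander-Gorenstein algebras. -/
def DomAG : Prop := IwanagaGorenstein R ∧
  ∀ P : ModuleCat.{0} R, Projective P → Indec R P → idim R P ≤ domdim R P

/-- Dominant Auslander-regular algebras. -/
def DomAR : Prop := DomAG R ∧ gldim R ≠ ⊤

/-- Self-injective algebras. -/
def SelfInjective : Prop := Injective (reg R)

/-! ## Ext groups -/

/-- Vanishing of the `n`-th Ext group. -/
noncomputable def extZero (n : ℕ) (X Y : ModuleCat.{0} R) : Prop :=
  letI := HasDerivedCategory.standard (ModuleCat.{0} R)
  letI : HasExt.{1} (ModuleCat.{0} R) := hasExt_of_hasDerivedCategory _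
  Subsingleton (Abelian.Ext.{1} X Y n)

/-! ## add, generators, cogenerators -/

/-- `N ∈ add M`. -/
def InAdd (M N : ModuleCat.{0} R) : Prop :=
  ∃ (k : ℕ) (s : N →ₗ[R] (Fin k → M)) (r : (Fin k → M) →ₗ[R] N), r ∘ₗ s = LinearMap.id

/-- `M` is a finitely generated generator-cogenerator of `mod R`. -/
def GenCogen (M : ModuleCat.{0} R) : Prop :=
  Module.Finite R M ∧
    (∀ P : ModuleCat.{0} R, Projective P → Indec R P → InAdd R M P) ∧
    (∀ I : ModuleCat.{0} R, Injective I → Indec R I → InAdd R M I)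

/-! ## Auslander-Reiten translates -/

/-- `0 → X → E → Z → 0` is an almost split (Auslander-Reiten) sequence. -/
def IsARSeq (X E Z : ModuleCat.{0} R) : Prop :=
  Indec R X ∧ Indec R Z ∧
  ∃ (f : X ⟶ E) (g : E ⟶ Z),
    Function.Injective f ∧ Function.Surjective g ∧
    LinearMap.range f.hom = LinearMap.ker g.hom ∧
    (¬ ∃ s : Z ⟶ E, s ≫ g = 𝟙 Z) ∧
    (∀ (W : ModuleCat.{0} R) (h : W ⟶ Z), (¬ ∃ s : Z ⟶ W, s ≫ h = 𝟙 Z) →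
      ∃ l : W ⟶ E, l ≫ g = h) ∧
    (∀ (W : ModuleCat.{0} R) (h : X ⟶ W), (¬ ∃ s : W ⟶ X, h ≫ s = 𝟙 X) →
      ∃ l : E ⟶ W, f ≫ l = h)

/-- `Y ≅ τ⁻ X`. -/
def IsTauMinus (X Y : ModuleCat.{0} R) : Prop :=
  (Injective X ∧ IsZero Y) ∨ ∃ E, IsARSeq R X E Y

/-- `Y ≅ τ X`. -/
def IsTauPlus (X Y : ModuleCat.{0} R) : Prop :=
  (Projective X ∧ IsZero Y) ∨ ∃ E, IsARSeq R Y E X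

/-- `Y` is a `k`-th cosyzygy `Ω^{-k} X`. -/
def IsCosyz (k : ℕ) (X Y : ModuleCat.{0} R) : Prop :=
  (k = 0 ∧ Nonempty (X ≅ Y)) ∨
  (1 ≤ k ∧ ∃ C : InjCores R X, C.Minimal R ∧
    Nonempty (Y ≅ ModuleCat.of R (LinearMap.ker (C.d k).hom)))

/-- `Y` is a `k`-th syzygy `Ω^k X`. -/
def IsSyz (k : ℕ) (X Y : ModuleCat.{0} R) : Prop :=
  (k = 0 ∧ Nonempty (X ≅ Y)) ∨
  (∃ D : ProjRes R X, D.Minimal R ∧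
    ((k = 1 ∧ Nonempty (Y ≅ ModuleCat.of R (LinearMap.ker D.π.hom))) ∨
     (∃ j : ℕ, k = j + 2 ∧ Nonempty (Y ≅ ModuleCat.of R (LinearMap.ker (D.d j).hom)))))

/-- `Y ≅ τₙ⁻ X = τ⁻ Ω^{-(n-1)} X`. -/
def IsTauNMinus (n : ℕ) (X Y : ModuleCat.{0} R) : Prop :=
  ∃ W, IsCosyz R (n - 1) X W ∧ IsTauMinus R W Y

/-- `Y ≅ τₙ X = τ Ω^{n-1} X`. -/
def IsTauNPlus (n : ℕ) (X Y : ModuleCat.{0} R) : Prop :=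
  ∃ W, IsSyz R (n - 1) X W ∧ IsTauPlus R W Y

/-! ## Mixed (pre)cluster tilting -/

/-- `M` is mixed precluster tilting with respect to the assignment `d` of positive
integers to the indecomposable non-injective summands of `M`:
`Ext^i(M,X) = 0` for `1 ≤ i < d X` and `τ⁻_{d X}(X) ∈ add M`. -/
def MixedPCT (M : ModuleCat.{0} R) (d : ModuleCat.{0} R → ℕ) : Prop :=
  GenCogen R M ∧
  ∀ X : ModuleCat.{0} R, Indec R X → InAdd R M X → ¬ Injective X →
    1 ≤ d X ∧ (∀ i : ℕ, 1 ≤ i → i < d X → extZero R i M X) ∧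
    ∃ Y, IsTauNMinus R (d X) X Y ∧ InAdd R M Y

/-- The dual formulation of mixed precluster tilting, with respect to an assignment `c`
on the indecomposable non-projective summands:
`Ext^i(X,M) = 0` for `1 ≤ i < c X` and `τ_{c X}(X) ∈ add M`. -/
def MixedPCTc (M : ModuleCat.{0} R) (c : ModuleCat.{0} R → ℕ) : Prop :=
  GenCogen R M ∧
  ∀ X : ModuleCat.{0} R, Indec R X → InAdd R M X → ¬ Projective X →
    1 ≤ c X ∧ (∀ i : ℕ, 1 ≤ i → i < c X → extZero R i X M) ∧
    ∃ Y, IsTauNPlus R (c X) X Y ∧ InAdd R M Y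

def IsMixedPCT (M : ModuleCat.{0} R) : Prop := ∃ d, MixedPCT R M d

/-- The subcategory `Z(M)` (as a predicate): `Y` satisfies `Ext^i(Y, X) = 0` for all
indecomposable summands `X` of `M` and all `1 ≤ i ≤ d X - 1`. -/
noncomputable def InZ (M : ModuleCat.{0} R) (d : ModuleCat.{0} R → ℕ) (Y : ModuleCat.{0} R) : Prop :=
  Module.Finite R Y ∧
  ∀ X : ModuleCat.{0} R, Indec R X → InAdd R M X →
    ∀ i : ℕ, 1 ≤ i → i ≤ d X - 1 → extZero R i Y X

/-- Maximal Cohen-Macaulay (Gorenstein projective) modules. -/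
noncomputable def InCM (N : ModuleCat.{0} R) : Prop :=
  Module.Finite R N ∧ ∀ i : ℕ, 1 ≤ i → extZero R i N (reg R)

/-! ## Miscellaneous ring-theoretic notions -/

/-- A primitive idempotent. -/
def IsPrimitiveIdem (e : R) : Prop :=
  IsIdempotentElem e ∧ e ≠ 0 ∧
  ∀ f : R, IsIdempotentElem f → e * f = f → f * e = f → f = 0 ∨ f = e

/-- Ring-indecomposable: no nontrivial central idempotents. -/
def RingIndec : Prop :=
  ∀ e : R, IsIdempotentElem e → e ∈ Set.center R → e = 0 ∨ e = 1

/-- Loewy length of a module, as an element of `ℕ∞`. -/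
noncomputable def LL (M : ModuleCat.{0} R) : ℕ∞ :=
  sInf {n : ℕ∞ | ∃ k : ℕ, n = (k : ℕ∞) ∧
    (Ideal.jacobson (⊥ : Ideal R)) ^ k • (⊤ : Submodule R M) = ⊥}

noncomputable def LLAlg : ℕ∞ := LL R (reg R)

/-- `ℓ`-stiff algebras. -/
noncomputable def Stiff (ℓ : ℕ) : Prop :=
  LLAlg R = (ℓ : ℕ∞) ∧
  ∀ I : ModuleCat.{0} R, Module.Finite R I → Indec R I → Injective I →
    (Projective I ↔ LL R I = (ℓ : ℕ∞))

/-- `I` is an injective envelope of `S`. -/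
def IsInjEnv (S I : ModuleCat.{0} R) : Prop :=
  Injective I ∧ ∃ f : S ⟶ I, Function.Injective f ∧ Essential R (LinearMap.range f.hom)

end Paper

open Paper CategoryTheory


namespace StmtAux

open CategoryTheory Paper

variable {A : Type} [Ring A]

/-! ### Module-level injectivity and projectivity predicates -/

def InjP (Q : Type) [AddCommGroup Q] [Module A Q] : Prop :=
  ∀ (X Y : Type) [AddCommGroup X] [Module A X] [AddCommGroup Y] [Module A Y]
    (i : X →ₗ[A] Y), Function.Injective i → ∀ g : X →ₗ[A] Q,
      ∃ h : Y →ₗ[A] Q, h.comp i = g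

def ProjP (Q : Type) [AddCommGroup Q] [Module A Q] : Prop :=
  ∀ (X Y : Type) [AddCommGroup X] [Module A X] [AddCommGroup Y] [Module A Y]
    (p : X →ₗ[A] Y), Function.Surjective p → ∀ g : Q →ₗ[A] Y,
      ∃ h : Q →ₗ[A] X, p.comp h = g

lemma injP_of_inj {N : ModuleCat.{0} A} (h : Injective N) : InjP (A := A) N := by
  intro X Y _ _ _ _ i hi g
  letI i' : ModuleCat.of A X ⟶ ModuleCat.of A Y := ModuleCat.ofHom i
  haveI : Mono i' := (ModuleCat.mono_iff_injective i').mpr hi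
  exact ⟨(Injective.factorThru (show ModuleCat.of A X ⟶ N from ModuleCat.ofHom g) i').hom,
    congrArg ModuleCat.Hom.hom (Injective.comp_factorThru _ i')⟩

lemma projP_of_proj {N : ModuleCat.{0} A} (h : Projective N) : ProjP (A := A) N := by
  intro X Y _ _ _ _ p hp g
  letI p' : ModuleCat.of A X ⟶ ModuleCat.of A Y := ModuleCat.ofHom p
  haveI : Epi p' := (ModuleCat.epi_iff_surjective p').mpr hp
  exact ⟨(Projective.factorThru (show N ⟶ ModuleCat.of A Y from ModuleCat.ofHom g) p').hom,
    congrArg ModuleCat.Hom.hom (Projective.factorThru_comp _ p')⟩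

lemma injP_punit : InjP (A := A) PUnit := by
  intro X Y _ _ _ _ i hi g
  exact ⟨0, LinearMap.ext fun x => Subsingleton.elim _ _⟩

lemma InjP.prod {X Y : Type} [AddCommGroup X] [Module A X] [AddCommGroup Y] [Module A Y]
    (hX : InjP (A := A) X) (hY : InjP (A := A) Y) : InjP (A := A) (X × Y) := by
  intro W Z _ _ _ _ i hi g
  obtain ⟨h1, e1⟩ := hX W Z i hi ((LinearMap.fst A X Y).comp g)
  obtain ⟨h2, e2⟩ := hY W Z i hi ((LinearMap.snd A X Y).comp g)
  refine ⟨h1.prod h2, LinearMap.ext fun w => ?_⟩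
  have e1' := congrArg (fun f => f w) e1
  have e2' := congrArg (fun f => f w) e2
  simp only [LinearMap.comp_apply, LinearMap.fst_apply, LinearMap.snd_apply] at e1' e2'
  simp only [LinearMap.comp_apply, LinearMap.prod_apply, Pi.prod]
  exact Prod.ext e1' e2'

lemma InjP.of_retract {X Q : Type} [AddCommGroup X] [Module A X] [AddCommGroup Q] [Module A Q]
    (s : Q →ₗ[A] X) (r : X →ₗ[A] Q) (hrs : r.comp s = LinearMap.id)
    (hX : InjP (A := A) X) : InjP (A := A) Q := by
  intro W Z _ _ _ _ i hi g
  obtain ⟨h, e⟩ := hX W Z i hi (s.comp g)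
  refine ⟨r.comp h, LinearMap.ext fun w => ?_⟩
  have e' := congrArg (fun f => f w) e
  simp only [LinearMap.comp_apply] at e' ⊢
  rw [e']
  have := congrArg (fun f => f (g w)) hrs
  simpa using this

lemma InjP.of_equiv {X Q : Type} [AddCommGroup X] [Module A X] [AddCommGroup Q] [Module A Q]
    (e : X ≃ₗ[A] Q) (hX : InjP (A := A) X) : InjP (A := A) Q :=
  InjP.of_retract (e.symm : Q →ₗ[A] X) (e : X →ₗ[A] Q)
    (LinearMap.ext fun q => e.apply_symm_apply q) hX

lemma ProjP.of_retract {X Q : Type} [AddCommGroup X] [Module A X] [AddCommGroup Q] [Module A Q]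
    (s : Q →ₗ[A] X) (r : X →ₗ[A] Q) (hrs : r.comp s = LinearMap.id)
    (hX : ProjP (A := A) X) : ProjP (A := A) Q := by
  intro W Z _ _ _ _ p hp g
  obtain ⟨h, e⟩ := hX W Z p hp (g.comp r)
  refine ⟨h.comp s, LinearMap.ext fun q => ?_⟩
  have e' := congrArg (fun f => f (s q)) e
  simp only [LinearMap.comp_apply] at e' ⊢
  rw [e']
  have := congrArg (fun f => f q) hrs
  simp only [LinearMap.comp_apply, LinearMap.id_apply] at this
  rw [this]

/-! ### Splitting lemmas for short exact sequences -/

lemma split_equiv {X D B : Type} [AddCommGroup X] [Module A X] [AddCommGroup D] [Module A D]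
    [AddCommGroup B] [Module A B]
    (g : X →ₗ[A] D) (π : D →ₗ[A] B)
    (hg : Function.Injective g) (hπ : Function.Surjective π)
    (hker : LinearMap.ker π = LinearMap.range g)
    (r : D →ₗ[A] X) (hr : r.comp g = LinearMap.id) :
    Nonempty (D ≃ₗ[A] X × B) := by
  have hrg : ∀ x, r (g x) = x := fun x => congrArg (fun f => f x) hr
  refine ⟨LinearEquiv.ofBijective (r.prod π) ⟨?_, ?_⟩⟩
  · intro d d' h
    have h1 : r d = r d' := congrArg Prod.fst h
    have h2 : π d = π d' := congrArg Prod.snd h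
    have : d - d' ∈ LinearMap.ker π := by
      simp [LinearMap.mem_ker, map_sub, h2]
    rw [hker] at this
    obtain ⟨x, hx⟩ := this
    have : x = 0 := by
      have := congrArg r hx
      rw [hrg] at this
      simp [map_sub, h1] at this
      exact this
    rw [this, map_zero] at hx
    exact sub_eq_zero.mp hx.symm
  · rintro ⟨x, b⟩
    obtain ⟨d, hd⟩ := hπ b
    refine ⟨d + g (x - r d), ?_⟩
    have hπg : π (g (x - r d)) = 0 := by
      have : g (x - r d) ∈ LinearMap.ker π := by
        rw [hker]; exact ⟨x - r d, rfl⟩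
      simpa [LinearMap.mem_ker] using this
    have h1 : r (d + g (x - r d)) = x := by
      rw [map_add, hrg]; abel
    have h2 : π (d + g (x - r d)) = b := by
      rw [map_add, hπg, add_zero, hd]
    simp only [LinearMap.prod_apply, Pi.prod]
    exact Prod.ext h1 h2

lemma retraction_of_section {X D B : Type} [AddCommGroup X] [Module A X] [AddCommGroup D]
    [Module A D] [AddCommGroup B] [Module A B]
    (g : X →ₗ[A] D) (π : D →ₗ[A] B)
    (hg : Function.Injective g)
    (hker : LinearMap.ker π = LinearMap.range g)
    (s : B →ₗ[A] D) (hs : π.comp s = LinearMap.id) :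
    ∃ r : D →ₗ[A] X, r.comp g = LinearMap.id := by
  have hsπ : ∀ b, π (s b) = b := fun b => congrArg (fun f => f b) hs
  set t : D →ₗ[A] D := LinearMap.id - s.comp π with ht
  have htr : ∀ d, t d ∈ LinearMap.range g := by
    intro d
    rw [← hker, LinearMap.mem_ker]
    simp [ht, map_sub, hsπ]
  refine ⟨((LinearEquiv.ofInjective g hg).symm : LinearMap.range g →ₗ[A] X).comp
    (t.codRestrict (LinearMap.range g) htr), LinearMap.ext fun x => ?_⟩
  simp only [LinearMap.comp_apply, LinearMap.codRestrict_apply, LinearMap.id_apply]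
  apply hg
  have key : ∀ y : LinearMap.range g, g ((LinearEquiv.ofInjective g hg).symm y) = (y : D) := by
    intro y
    have := LinearEquiv.ofInjective_apply g (h := hg) ((LinearEquiv.ofInjective g hg).symm y)
    rw [LinearEquiv.apply_symm_apply] at this
    exact this.symm
  show g ((LinearEquiv.ofInjective g hg).symm ((t.codRestrict (LinearMap.range g) htr) (g x))) = g x
  rw [key]
  have : π (g x) = 0 := by
    have : g x ∈ LinearMap.ker π := by rw [hker]; exact ⟨x, rfl⟩
    simpa [LinearMap.mem_ker] using this
  simp [ht, this]

/-! ### Dual Schanuel lemma -/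

lemma schanuel {N I I' B B' : Type}
    [AddCommGroup N] [Module A N] [AddCommGroup I] [Module A I]
    [AddCommGroup I'] [Module A I'] [AddCommGroup B] [Module A B]
    [AddCommGroup B'] [Module A B']
    (f : N →ₗ[A] I) (f' : N →ₗ[A] I')
    (p : I →ₗ[A] B) (p' : I' →ₗ[A] B')
    (hf : Function.Injective f) (hf' : Function.Injective f')
    (hp : Function.Surjective p) (hp' : Function.Surjective p')
    (hk : LinearMap.ker p = LinearMap.range f)
    (hk' : LinearMap.ker p' = LinearMap.range f')
    (hI : InjP (A := A) I) (hI' : InjP (A := A) I') :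
    Nonempty ((B × I') ≃ₗ[A] (B' × I)) := by
  set S : Submodule A (I × I') := LinearMap.range (f.prod (-f')) with hS
  set q : (I × I') →ₗ[A] ((I × I') ⧸ S) := S.mkQ with hq
  -- the two maps into the pushout
  set j : I →ₗ[A] ((I × I') ⧸ S) := q.comp (LinearMap.inl A I I') with hj
  set j' : I' →ₗ[A] ((I × I') ⧸ S) := q.comp (LinearMap.inr A I I') with hj'
  have hjinj : Function.Injective j := by
    intro a a' h
    have : q (a - a', 0) = 0 := by
      have := sub_eq_zero.mpr h
      simp only [hj, LinearMap.comp_apply, LinearMap.inl_apply] at this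
      rw [← map_sub] at this
      simpa using this
    rw [hq, Submodule.mkQ_apply, Submodule.Quotient.mk_eq_zero] at this
    obtain ⟨x, hx⟩ := this
    have h2 : -f' x = 0 := congrArg Prod.snd hx
    have hx0 : x = 0 := hf' (by simpa using h2)
    have h1 : f x = a - a' := congrArg Prod.fst hx
    rw [hx0, map_zero] at h1
    exact sub_eq_zero.mp h1.symm
  have hj'inj : Function.Injective j' := by
    intro a a' h
    have : q (0, a - a') = 0 := by
      have := sub_eq_zero.mpr h
      simp only [hj', LinearMap.comp_apply, LinearMap.inr_apply] at this
      rw [← map_sub] at this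
      simpa using this
    rw [hq, Submodule.mkQ_apply, Submodule.Quotient.mk_eq_zero] at this
    obtain ⟨x, hx⟩ := this
    have h1 : f x = 0 := congrArg Prod.fst hx
    have hx0 : x = 0 := hf (by rw [h1, map_zero])
    have h2 : -f' x = a - a' := congrArg Prod.snd hx
    rw [hx0, map_zero, neg_zero] at h2
    exact sub_eq_zero.mp h2.symm
  -- the two projections out of the pushout
  have hle : S ≤ LinearMap.ker (p.comp (LinearMap.fst A I I')) := by
    rintro ⟨a, b⟩ ⟨x, hx⟩
    have h1 : f x = a := congrArg Prod.fst hx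
    have : a ∈ LinearMap.range f := ⟨x, h1⟩
    rw [← hk] at this
    simpa [LinearMap.mem_ker] using this
  have hle' : S ≤ LinearMap.ker (p'.comp (LinearMap.snd A I I')) := by
    rintro ⟨a, b⟩ ⟨x, hx⟩
    have h2 : -f' x = b := congrArg Prod.snd hx
    have : b ∈ LinearMap.range f' := ⟨-x, by rw [map_neg]; exact h2⟩
    rw [← hk'] at this
    simpa [LinearMap.mem_ker] using this
  set π : ((I × I') ⧸ S) →ₗ[A] B := S.liftQ (p.comp (LinearMap.fst A I I')) hle with hπ
  set π' : ((I × I') ⧸ S) →ₗ[A] B' := S.liftQ (p'.comp (LinearMap.snd A I I')) hle' with hπ'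
  have hqapp : ∀ (a : I) (b : I'), π (q (a, b)) = p a := fun a b => rfl
  have hqapp' : ∀ (a : I) (b : I'), π' (q (a, b)) = p' b := fun a b => rfl
  have hπsurj : Function.Surjective π := by
    intro b
    obtain ⟨a, ha⟩ := hp b
    exact ⟨q (a, 0), by rw [hqapp]; exact ha⟩
  have hπ'surj : Function.Surjective π' := by
    intro b
    obtain ⟨a, ha⟩ := hp' b
    exact ⟨q (0, a), by rw [hqapp']; exact ha⟩
  have hkerπ : LinearMap.ker π = LinearMap.range j' := by
    apply le_antisymm
    · intro d hd
      obtain ⟨⟨a, b⟩, rfl⟩ := S.mkQ_surjective d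
      have : p a = 0 := hd
      have : a ∈ LinearMap.range f := by rw [← hk]; exact this
      obtain ⟨x, hx⟩ := this
      refine ⟨b + f' x, ?_⟩
      have : q ((0 : I), b + f' x) - q (a, b) = q (-(f x), f' x) := by
        rw [← map_sub]
        congr 1
        ext <;> simp [hx]
      have hz : q (-(f x), f' x) = 0 := by
        rw [hq, Submodule.mkQ_apply, Submodule.Quotient.mk_eq_zero]
        exact ⟨-x, by ext <;> simp⟩
      have heq : q ((0 : I), b + f' x) = q (a, b) := by
        have := sub_eq_zero.mp (this.trans hz)
        exact this
      simpa [hj', hq, LinearMap.comp_apply] using heq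
    · rintro _ ⟨b, rfl⟩
      show π (q (0, b)) = 0
      rw [hqapp, map_zero]
  have hkerπ' : LinearMap.ker π' = LinearMap.range j := by
    apply le_antisymm
    · intro d hd
      obtain ⟨⟨a, b⟩, rfl⟩ := S.mkQ_surjective d
      have : p' b = 0 := hd
      have : b ∈ LinearMap.range f' := by rw [← hk']; exact this
      obtain ⟨x, hx⟩ := this
      refine ⟨a + f x, ?_⟩
      have : q (a + f x, (0 : I')) - q (a, b) = q (f x, -f' x + (-b + f' x)) := by
        rw [← map_sub]
        congr 1
        ext <;> simp [hx]
      have hz : q (f x, -f' x + (-b + f' x)) = 0 := by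
        have : -b + f' x = 0 := by rw [← hx]; abel
        rw [this, add_zero, hq, Submodule.mkQ_apply, Submodule.Quotient.mk_eq_zero]
        exact ⟨x, rfl⟩
      have heq : q (a + f x, (0 : I')) = q (a, b) := sub_eq_zero.mp (this.trans hz)
      simpa [hj, hq, LinearMap.comp_apply] using heq
    · rintro _ ⟨a, rfl⟩
      show π' (q (a, 0)) = 0
      rw [hqapp', map_zero]
  -- split both sequences
  obtain ⟨r', hr'⟩ := hI' I' ((I × I') ⧸ S) j' hj'inj LinearMap.id
  obtain ⟨r, hr⟩ := hI I ((I × I') ⧸ S) j hjinj LinearMap.id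
  obtain ⟨e1⟩ := split_equiv j' π hj'inj hπsurj hkerπ r' hr'
  obtain ⟨e2⟩ := split_equiv j π' hjinj hπ'surj hkerπ' r hr
  exact ⟨(LinearEquiv.prodComm A B I').trans (e1.symm.trans (e2.trans
    (LinearEquiv.prodComm A I B')))⟩

/-! ### The cosyzygy chain of an injective coresolution -/

section Chain

variable {M : ModuleCat.{0} A}

/-- The `i`-th cosyzygy object of an injective coresolution. -/
noncomputable def BM (C : InjCores A M) : ℕ → ModuleCat.{0} A
  | 0 => M
  | (j + 1) => ModuleCat.of A (LinearMap.ker (C.d (j + 1)).hom)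

/-- The canonical mono `BM C i → C.I i`. -/
noncomputable def gmap (C : InjCores A M) : (i : ℕ) → (BM C i →ₗ[A] C.I i)
  | 0 => C.ι.hom
  | (j + 1) => (LinearMap.ker (C.d (j + 1)).hom).subtype

lemma dmem (C : InjCores A M) (i : ℕ) (x : C.I i) : C.d i x ∈ LinearMap.ker (C.d (i + 1)).hom := by
  rw [← C.exact i]
  exact ⟨x, rfl⟩

/-- The canonical epi `C.I i → BM C (i+1)`. -/
noncomputable def pmap (C : InjCores A M) (i : ℕ) : (C.I i →ₗ[A] BM C (i + 1)) :=
  (C.d i).hom.codRestrict (LinearMap.ker (C.d (i + 1)).hom) (dmem C i)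

lemma gmap_inj (C : InjCores A M) (i : ℕ) : Function.Injective (gmap C i) := by
  cases i with
  | zero => exact C.mono
  | succ j => exact Subtype.val_injective

lemma gmap_range (C : InjCores A M) (i : ℕ) :
    LinearMap.range (gmap C i) = LinearMap.ker (C.d i).hom := by
  cases i with
  | zero => exact C.exact0
  | succ j => exact Submodule.range_subtype _

lemma pmap_surj (C : InjCores A M) (i : ℕ) : Function.Surjective (pmap C i) := by
  have h : Function.Surjective
      ((C.d i).hom.codRestrict (LinearMap.ker (C.d (i + 1)).hom) (dmem C i)) := by
    intro y
    have hy : (y : C.I (i + 1)) ∈ LinearMap.range (C.d i).hom := by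
      rw [C.exact i]; exact y.2
    obtain ⟨x, hx⟩ := hy
    exact ⟨x, Subtype.ext hx⟩
  exact h

lemma pmap_ker (C : InjCores A M) (i : ℕ) :
    LinearMap.ker (pmap C i) = LinearMap.range (gmap C i) := by
  rw [gmap_range]
  exact LinearMap.ker_codRestrict _ _ _

/-! ### The co-Schanuel ladder -/

lemma ladder (C C' : InjCores A M) (i : ℕ) :
    ∃ (J J' : ModuleCat.{0} A), InjP (A := A) J ∧ InjP (A := A) J' ∧
      Nonempty ((↥(BM C i) × ↥J) ≃ₗ[A] (↥(BM C' i) × ↥J')) := by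
  induction i with
  | zero =>
    exact ⟨ModuleCat.of A PUnit, ModuleCat.of A PUnit, injP_punit, injP_punit,
      ⟨LinearEquiv.refl A (↥M × PUnit)⟩⟩
  | succ i ih =>
    obtain ⟨J, J', hJ, hJ', ⟨e⟩⟩ := ih
    have hf : Function.Injective ((gmap C i).prodMap (LinearMap.id : ↥J →ₗ[A] ↥J)) :=
      (gmap_inj C i).prodMap fun a b h => h
    have hf' : Function.Injective
        ((((gmap C' i).prodMap (LinearMap.id : ↥J' →ₗ[A] ↥J')).comp
          (e : (↥(BM C i) × ↥J) →ₗ[A] (↥(BM C' i) × ↥J')))) :=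
      fun a b h => e.injective (((gmap_inj C' i).prodMap (fun a b h => h)) h)
    have hp : Function.Surjective
        ((pmap C i).comp (LinearMap.fst A (C.I i) ↥J)) := by
      intro y
      obtain ⟨x, hx⟩ := pmap_surj C i y
      exact ⟨(x, 0), hx⟩
    have hp' : Function.Surjective
        ((pmap C' i).comp (LinearMap.fst A (C'.I i) ↥J')) := by
      intro y
      obtain ⟨x, hx⟩ := pmap_surj C' i y
      exact ⟨(x, 0), hx⟩
    have hkey : ∀ (N : ModuleCat.{0} A) (C₀ : InjCores A N) (i : ℕ)
        (J₀ : ModuleCat.{0} A),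
        LinearMap.ker ((pmap C₀ i).comp (LinearMap.fst A (C₀.I i) ↥J₀)) =
          LinearMap.range ((gmap C₀ i).prodMap (LinearMap.id : ↥J₀ →ₗ[A] ↥J₀)) := by
      intro N C₀ i J₀
      ext ⟨a, b⟩
      simp only [LinearMap.mem_ker, LinearMap.comp_apply, LinearMap.fst_apply,
        LinearMap.mem_range]
      constructor
      · intro h
        have : a ∈ LinearMap.ker (pmap C₀ i) := h
        rw [pmap_ker] at this
        obtain ⟨x, hx⟩ := this
        exact ⟨(x, b), by rw [LinearMap.prodMap_apply]; exact Prod.ext hx rfl⟩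
      · rintro ⟨⟨x, y⟩, hxy⟩
        have h1 : gmap C₀ i x = a := congrArg Prod.fst hxy
        have : a ∈ LinearMap.range (gmap C₀ i) := ⟨x, h1⟩
        rw [← pmap_ker] at this
        exact this
    have hk : LinearMap.ker ((pmap C i).comp (LinearMap.fst A (C.I i) ↥J)) =
        LinearMap.range ((gmap C i).prodMap (LinearMap.id : ↥J →ₗ[A] ↥J)) := hkey M C i J
    have hk' : LinearMap.ker ((pmap C' i).comp (LinearMap.fst A (C'.I i) ↥J')) =
        LinearMap.range ((((gmap C' i).prodMap (LinearMap.id : ↥J' →ₗ[A] ↥J')).comp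
          (e : (↥(BM C i) × ↥J) →ₗ[A] (↥(BM C' i) × ↥J')))) := by
      rw [LinearMap.range_comp, LinearEquiv.range, Submodule.map_top]
      exact hkey M C' i J'
    have hI : InjP (A := A) (↥(C.I i) × ↥J) := (injP_of_inj (C.inj i)).prod hJ
    have hI' : InjP (A := A) (↥(C'.I i) × ↥J') := (injP_of_inj (C'.inj i)).prod hJ'
    obtain ⟨e'⟩ := schanuel
      ((gmap C i).prodMap (LinearMap.id : ↥J →ₗ[A] ↥J))
      ((((gmap C' i).prodMap (LinearMap.id : ↥J' →ₗ[A] ↥J')).comp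
          (e : (↥(BM C i) × ↥J) →ₗ[A] (↥(BM C' i) × ↥J'))))
      ((pmap C i).comp (LinearMap.fst A (C.I i) ↥J))
      ((pmap C' i).comp (LinearMap.fst A (C'.I i) ↥J'))
      hf hf' hp hp' hk hk' hI hI'
    exact ⟨ModuleCat.of A (↥(C'.I i) × ↥J'), ModuleCat.of A (↥(C.I i) × ↥J),
      hI', hI, ⟨e'⟩⟩

/-! ### The main lemma -/

lemma subsingleton_of_isZero {X : ModuleCat.{0} A} (h : Limits.IsZero X) :
    Subsingleton X := by
  have h0 : (𝟙 X : X ⟶ X) = 0 := h.eq_of_src _ _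
  constructor
  intro a b
  calc a = (𝟙 X : X ⟶ X) a := rfl
    _ = (0 : X ⟶ X) a := by rw [h0]
    _ = (𝟙 X : X ⟶ X) b := by rw [h0]; rfl
    _ = b := rfl

lemma main (M : ModuleCat.{0} A) (C C' : InjCores A M) (n k : ℕ) (hnk : n < k)
    (hC : ∀ m, m < k → Projective (C.I m))
    (hz : Subsingleton (C'.I (n + 1))) : Injective M := by
  -- Step 1: `BM C' n` is injective.
  have hker_top : LinearMap.ker (C'.d n).hom = ⊤ := by
    ext x
    simp only [LinearMap.mem_ker, Submodule.mem_top, iff_true]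
    exact Subsingleton.elim _ _
  have hg'surj : Function.Surjective (gmap C' n) := by
    rw [← LinearMap.range_eq_top, gmap_range, hker_top]
  have hB'n : InjP (A := A) (BM C' n) := by
    have e := LinearEquiv.ofBijective (gmap C' n) ⟨gmap_inj C' n, hg'surj⟩
    exact InjP.of_equiv e.symm (injP_of_inj (C'.inj n))
  -- Step 2: `BM C n` is injective.
  obtain ⟨J, J', hJ, hJ', ⟨e⟩⟩ := ladder C C' n
  have hBn : InjP (A := A) (BM C n) := by
    have h1 : InjP (A := A) (↥(BM C' n) × ↥J') := hB'n.prod hJ'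
    have h2 : InjP (A := A) (↥(BM C n) × ↥J) := InjP.of_equiv e.symm h1
    exact InjP.of_retract (LinearMap.inl A (↥(BM C n)) ↥J)
      (LinearMap.fst A (↥(BM C n)) ↥J) (LinearMap.fst_comp_inl A _ _) h2
  -- Step 3: downward induction gives retractions.
  have claim : ∀ j i, i + j = n →
      ∃ r : C.I i →ₗ[A] BM C i, r.comp (gmap C i) = LinearMap.id := by
    intro j
    induction j with
    | zero =>
      intro i hi
      subst hi
      rw [Nat.add_zero] at *
      exact hBn (↥(BM C i)) (↥(C.I i)) (gmap C i) (gmap_inj C i) LinearMap.id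
    | succ j ih =>
      intro i hi
      obtain ⟨r₁, hr₁⟩ := ih (i + 1) (by omega)
      have hproj : ProjP (A := A) (BM C (i + 1)) :=
        ProjP.of_retract (gmap C (i + 1)) r₁ hr₁
          (projP_of_proj (hC (i + 1) (by omega)))
      obtain ⟨s, hs⟩ := hproj (↥(C.I i)) (↥(BM C (i + 1))) (pmap C i) (pmap_surj C i)
        LinearMap.id
      exact retraction_of_section (gmap C i) (pmap C i) (gmap_inj C i)
        (pmap_ker C i) s hs
  obtain ⟨r, hr⟩ := claim n 0 (by omega)
  -- Step 4: conclude.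
  haveI := C.inj 0
  constructor
  intro X Y g f hf
  refine ⟨Injective.factorThru (g ≫ C.ι) f ≫ (show C.I 0 ⟶ M from ModuleCat.ofHom r), ?_⟩
  have hιr : C.ι ≫ (show C.I 0 ⟶ M from ModuleCat.ofHom r) = 𝟙 M := ModuleCat.hom_ext hr
  rw [← Category.assoc, Injective.comp_factorThru, Category.assoc, hιr,
    Category.comp_id]

end Chain

end StmtAux

/-- For a dominant Auslander-Gorenstein algebra, every indecomposable
projective non-injective module satisfies `domdim P = idim P`. -/
theorem stmt_0 (K A : Type) [Field K] [Ring A] [Algebra K A] [FiniteDimensional K A]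
    (hA : DomAG A) (P : ModuleCat.{0} A) (hP : Projective P) (hInd : Indec A P)
    (hni : ¬ Injective P) :
    domdim A P = idim A P := by
  refine le_antisymm ?_ (hA.2 P hP hInd)
  simp only [domdim, idim]
  refine sSup_le ?_
  rintro s ⟨k, rfl, C, hC⟩
  refine le_sInf ?_
  rintro t ⟨C', hC'⟩
  by_contra hlt
  push_neg at hlt
  have htop : t ≠ ⊤ := ne_top_of_lt hlt
  lift t to ℕ using htop
  have hnk : t < k := by exact_mod_cast hlt
  have hz : Subsingleton (C'.I (t + 1)) :=
    StmtAux.subsingleton_of_isZero (hC' (t + 1) (by exact_mod_cast Nat.lt_succ_self t))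
  exact hni (StmtAux.main P C C' t k hnk hC hz)
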